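/- Let r > 1 be an integer, G a finite group, x an element of the simplex S ⊂ R[G], and for the map x ↦ x^r consider Cesàro averages q^(n)(x) = (1/n) Σ_{i=1}^n x^{r^i}. Let (m₀, ..., m_{d-1}) be the eventually repeating part of the sequence (r^n mod m_x). Then q^(n)(x) converges to (1/d) Σ_{i=0}^{d-1} x^{m_i} c_x as n → ∞. -/

import Mathlib

open Filter Topology

namespace Stmt19Aux
open scoped Classical
variable {G : Type*} [Group G] [Fintype G]

noncomputable instance instCoeFunMA : CoeFun (MonoidAlgebra ℝ G) (fun _ => G → ℝ) :=
  ⟨fun x => x.coeff⟩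


theorem conv_apply (f h : MonoidAlgebra ℝ G) (t : G) :
    (f * h) t = ∑ a : G, f a * h (a⁻¹ * t) := by
  rw [MonoidAlgebra.mul_apply_left, Finsupp.sum_fintype]
  intro a; simp

theorem tot_mul (f h : MonoidAlgebra ℝ G) :
    ∑ g : G, (f * h) g = (∑ g : G, f g) * (∑ g : G, h g) := by
  simp only [conv_apply]
  rw [Finset.sum_comm, Finset.sum_mul]
  refine Finset.sum_congr rfl fun a _ => ?_
  rw [Finset.mul_sum]
  exact Fintype.sum_equiv (Equiv.mulLeft a⁻¹) (fun g => f a * h (a⁻¹ * g))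
    (fun g => f a * h g) (fun g => rfl)



theorem mul_nonneg_apply {f h : MonoidAlgebra ℝ G} (hf : ∀ g, 0 ≤ f g)
    (hh : ∀ g, 0 ≤ h g) : ∀ g, 0 ≤ (f * h) g := by
  intro g
  rw [conv_apply]
  exact Finset.sum_nonneg fun a _ => mul_nonneg (hf a) (hh _)

theorem conv_bound_left {p v : MonoidAlgebra ℝ G} {M : ℝ} (hp0 : ∀ g, 0 ≤ p g)
    (hp1 : ∑ g : G, p g = 1) (hv : ∀ a, |v a| ≤ M) (g : G) : |(p * v) g| ≤ M := by
  rw [conv_apply]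
  calc |∑ a : G, p a * v (a⁻¹ * g)| ≤ ∑ a : G, |p a * v (a⁻¹ * g)| :=
        Finset.abs_sum_le_sum_abs _ _
    _ ≤ ∑ a : G, p a * M := by
        refine Finset.sum_le_sum fun a _ => ?_
        rw [abs_mul, abs_of_nonneg (hp0 a)]
        exact mul_le_mul_of_nonneg_left (hv _) (hp0 a)
    _ = M := by rw [← Finset.sum_mul, hp1, one_mul]

theorem conv_bound_right {v q : MonoidAlgebra ℝ G} {M : ℝ} (hM : 0 ≤ M)
    (hv : ∀ a, |v a| ≤ M) (hq0 : ∀ g, 0 ≤ q g) (g : G) :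
    |(v * q) g| ≤ M * ∑ a : G, q a := by
  rw [conv_apply]
  calc |∑ a : G, v a * q (a⁻¹ * g)| ≤ ∑ a : G, |v a * q (a⁻¹ * g)| :=
        Finset.abs_sum_le_sum_abs _ _
    _ ≤ ∑ a : G, M * q (a⁻¹ * g) := by
        refine Finset.sum_le_sum fun a _ => ?_
        rw [abs_mul, abs_of_nonneg (hq0 _)]
        exact mul_le_mul_of_nonneg_right (hv _) (hq0 _)
    _ = M * ∑ a : G, q a := by
        rw [← Finset.mul_sum]
        congr 1
        exact Fintype.sum_equiv ((Equiv.inv G).trans (Equiv.mulRight g))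
          (fun a => q (a⁻¹ * g)) (fun a => q a) (fun a => rfl)

theorem suppIn_mul {H : Subgroup G} {f h : MonoidAlgebra ℝ G}
    (hf : ∀ g ∉ H, f g = 0) (hh : ∀ g ∉ H, h g = 0) :
    ∀ g ∉ H, (f * h) g = 0 := by
  intro g hg
  rw [conv_apply]
  refine Finset.sum_eq_zero fun a _ => ?_
  by_cases ha : a ∈ H
  · have : a⁻¹ * g ∉ H := fun hmem => hg (by simpa using mul_mem ha hmem)
    rw [hh _ this, mul_zero]
  · rw [hf a ha, zero_mul]



noncomputable def cH (H : Subgroup G) : MonoidAlgebra ℝ G :=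
  (Nat.card H : ℝ)⁻¹ • ∑ g ∈ Finset.univ.filter (· ∈ H), MonoidAlgebra.single g (1 : ℝ)

theorem card_pos (H : Subgroup G) : 0 < (Nat.card H : ℝ) := by
  exact_mod_cast Nat.card_pos

theorem cH_apply (H : Subgroup G) (g : G) :
    cH H g = if g ∈ H then (Nat.card H : ℝ)⁻¹ else 0 := by
  classical
  rw [cH, MonoidAlgebra.coeff_smul_apply]
  rw [MonoidAlgebra.coeff_sum, Finset.sum_apply']
  simp only [MonoidAlgebra.single_apply]
  rw [Finset.sum_ite_eq' (Finset.univ.filter (· ∈ H)) g (fun _ => (1:ℝ))]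
  by_cases hg : g ∈ H <;> simp [hg]

theorem cH_nonneg (H : Subgroup G) (g : G) : 0 ≤ cH H g := by
  rw [cH_apply]
  split
  · positivity
  · exact le_refl 0


theorem card_filter (H : Subgroup G) :
    ((Finset.univ.filter (· ∈ H)).card : ℝ) = (Nat.card H : ℝ) := by
  congr 1
  rw [Nat.card_eq_fintype_card]
  rw [← Fintype.card_subtype]

theorem cH_sum (H : Subgroup G) : ∑ g : G, cH H g = 1 := by
  simp only [cH_apply]
  rw [← Finset.sum_filter, Finset.sum_const, nsmul_eq_mul]
  have := card_filter H
  rw [this, mul_inv_cancel₀ (card_pos H).ne']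

theorem cH_le_one (H : Subgroup G) (g : G) : cH H g ≤ 1 := by
  rw [cH_apply]
  split
  · rw [inv_le_one_iff₀]
    right
    exact_mod_cast Nat.card_pos
  · exact zero_le_one

theorem mul_cH {H : Subgroup G} {p : MonoidAlgebra ℝ G} (hp : ∀ g ∉ H, p g = 0) :
    p * cH H = (∑ a : G, p a) • cH H := by
  ext t
  rw [MonoidAlgebra.coeff_smul_apply, conv_apply, smul_eq_mul, Finset.sum_mul]
  refine Finset.sum_congr rfl fun a _ => ?_
  by_cases hpa : p a = 0
  · rw [hpa, zero_mul, zero_mul]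
  · have ha : a ∈ H := by by_contra h; exact hpa (hp a h)
    congr 1
    rw [cH_apply, cH_apply]
    have : a⁻¹ * t ∈ H ↔ t ∈ H := by
      constructor
      · intro h; simpa using mul_mem ha h
      · intro h; exact mul_mem (inv_mem ha) h
    simp only [this]

theorem cH_mul {H : Subgroup G} {q : MonoidAlgebra ℝ G} (hq : ∀ g ∉ H, q g = 0) :
    cH H * q = (∑ a : G, q a) • cH H := by
  ext t
  rw [MonoidAlgebra.coeff_smul_apply, conv_apply, smul_eq_mul]
  have key : ∀ a : G, cH H a * q (a⁻¹ * t) = cH H t * q (a⁻¹ * t) := by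
    intro a
    by_cases hqa : q (a⁻¹ * t) = 0
    · rw [hqa, mul_zero, mul_zero]
    · have hmem : a⁻¹ * t ∈ H := by by_contra h; exact hqa (hq _ h)
      congr 1
      rw [cH_apply, cH_apply]
      have : a ∈ H ↔ t ∈ H := by
        constructor
        · intro h; simpa using mul_mem h hmem
        · intro h
          have := mul_mem h (inv_mem hmem)
          simpa [mul_assoc] using this
      simp only [this]
  rw [Finset.sum_congr rfl fun a _ => key a, ← Finset.mul_sum]
  rw [mul_comm]
  congr 1
  exact Fintype.sum_equiv ((Equiv.inv G).trans (Equiv.mulRight t))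
    (fun a => q (a⁻¹ * t)) (fun a => q a) (fun a => rfl)


theorem one_apply' (g : G) : (1 : MonoidAlgebra ℝ G) g = if g = 1 then 1 else 0 := by
  rw [MonoidAlgebra.one_def, MonoidAlgebra.single_apply]
  simp only [eq_comm]

theorem pow_nonneg_apply {x : MonoidAlgebra ℝ G} (hx0 : ∀ g, 0 ≤ x g) (k : ℕ) :
    ∀ g, 0 ≤ (x ^ k) g := by
  induction k with
  | zero => intro g; rw [pow_zero, one_apply']; split <;> norm_num
  | succ k ih => rw [pow_succ]; exact mul_nonneg_apply ih hx0

theorem pow_sum_apply {x : MonoidAlgebra ℝ G} (hx1 : ∑ g : G, x g = 1) (k : ℕ) :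
    ∑ g : G, (x ^ k) g = 1 := by
  induction k with
  | zero =>
    simp only [pow_zero, one_apply']
    rw [← Finset.sum_filter, Finset.sum_const, nsmul_eq_mul]
    have : Finset.filter (fun a => a = (1:G)) Finset.univ = {1} := by
      ext a; simp
    rw [this]
    simp
  | succ k ih => rw [pow_succ, tot_mul, ih, hx1, one_mul]

theorem mul_apply_ge {f h : MonoidAlgebra ℝ G} (hf : ∀ g, 0 ≤ f g)
    (hh : ∀ g, 0 ≤ h g) (a b : G) : f a * h b ≤ (f * h) (a * b) := by
  rw [conv_apply]
  have : f a * h b = f a * h (a⁻¹ * (a * b)) := by group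
  rw [this]
  exact Finset.single_le_sum (f := fun i => f i * h (i⁻¹ * (a*b)))
    (fun i _ => mul_nonneg (hf i) (hh _)) (Finset.mem_univ a)

theorem suppIn_pow_dvd {H : Subgroup G} {x : MonoidAlgebra ℝ G} {mx : ℕ}
    (hsupp : ∀ g ∉ H, (x ^ mx) g = 0) {s : ℕ} (hdvd : mx ∣ s) :
    ∀ g ∉ H, (x ^ s) g = 0 := by
  obtain ⟨k, rfl⟩ := hdvd
  induction k with
  | zero =>
    intro g hg
    rw [Nat.mul_zero, pow_zero, one_apply', if_neg]
    intro h1; exact hg (h1 ▸ H.one_mem)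
  | succ k ih =>
    intro g hg
    rw [Nat.mul_succ, pow_add]
    exact suppIn_mul ih hsupp g hg

theorem doeblin (x : MonoidAlgebra ℝ G) (hx1 : ∑ g : G, x g = 1) (hx0 : ∀ g, 0 ≤ x g)
    (n : ℕ) (hn : IsLeast {k : ℕ | 0 < k ∧ (x ^ k) (1 : G) ≠ 0} n)
    (H : Subgroup G) (hH : H = Subgroup.closure ((x ^ n).coeff.support : Set G))
    (mx : ℕ) (hmx : IsLeast {k : ℕ | 0 < k ∧ ((x ^ k).coeff.support : Set G) ⊆ (H : Set G)} mx) :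
    ∃ P : ℕ, 0 < P ∧ mx ∣ P ∧ (∀ g ∉ H, (x ^ P) g = 0) ∧ (∀ h, h ∈ H → 0 < (x ^ P) h) := by
  obtain ⟨⟨hn0, hn1⟩, -⟩ := hn
  obtain ⟨⟨hmx0, hmxsupp⟩, -⟩ := hmx
  have hsuppmx : ∀ g ∉ H, (x ^ mx) g = 0 := by
    intro g hg
    by_contra hne
    exact hg (hmxsupp (Finsupp.mem_support_iff.mpr hne))
  set z : MonoidAlgebra ℝ G := x ^ (n * mx) with hz
  have hz0 : ∀ g, 0 ≤ z g := pow_nonneg_apply hx0 _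
  have hzpow0 : ∀ k g, 0 ≤ (z ^ k) g := by
    intro k g; rw [hz, ← pow_mul]; exact pow_nonneg_apply hx0 _ g
  -- (x^(n*k)) 1 > 0
  have hxn1 : 0 < (x ^ n) 1 := lt_of_le_of_ne (pow_nonneg_apply hx0 n 1) (Ne.symm hn1)
  have hnk1 : ∀ k : ℕ, 0 < (x ^ (n * k)) (1 : G) := by
    intro k
    induction k with
    | zero => simp [one_apply']
    | succ k ih =>
      rw [Nat.mul_succ, pow_add]
      calc (0:ℝ) < (x ^ (n*k)) 1 * (x ^ n) 1 := mul_pos ih hxn1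
        _ ≤ (x ^ (n*k) * x ^ n) (1 * 1) :=
            mul_apply_ge (pow_nonneg_apply hx0 _) (pow_nonneg_apply hx0 _) 1 1
        _ = (x ^ (n*k) * x ^ n) 1 := by rw [one_mul]
  have hz1 : 0 < z 1 := hnk1 mx
  -- monotonicity of support of powers of z
  have hmono : ∀ j k : ℕ, j ≤ k → ∀ g, 0 < (z ^ j) g → 0 < (z ^ k) g := by
    intro j k
    induction k with
    | zero => intro hjk g h; obtain rfl : j = 0 := Nat.le_zero.mp hjk; exact h
    | succ k ih =>
      intro hjk g h
      rcases Nat.lt_or_ge j (k+1) with hlt | hge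
      · have := ih (Nat.lt_succ_iff.mp hlt) g h
        calc (0:ℝ) < (z ^ k) g * z 1 := mul_pos this hz1
          _ ≤ (z ^ k * z) (g * 1) := mul_apply_ge (hzpow0 k) hz0 g 1
          _ = (z ^ (k+1)) g := by rw [mul_one, ← pow_succ]
      · have : j = k + 1 := le_antisymm hjk hge
        rwa [this] at h
  -- supp (x^n) ⊆ supp z
  have hxnz : ∀ g, (x ^ n) g ≠ 0 → 0 < z g := by
    intro g hg
    have hpos : 0 < (x ^ n) g := lt_of_le_of_ne (pow_nonneg_apply hx0 n g) (Ne.symm hg)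
    obtain ⟨mx', hmx'⟩ : ∃ mx', mx = mx' + 1 := ⟨mx - 1, by omega⟩
    have hsplit : n * mx = n + n * (mx - 1) := by
      subst hmx'; simp [Nat.mul_succ, Nat.succ_sub_one, Nat.add_comm]
    rw [hz, hsplit, pow_add]
    calc (0:ℝ) < (x ^ n) g * (x ^ (n * (mx-1))) 1 := mul_pos hpos (hnk1 _)
      _ ≤ (x ^ n * x ^ (n * (mx-1))) (g * 1) :=
          mul_apply_ge (pow_nonneg_apply hx0 _) (pow_nonneg_apply hx0 _) g 1
      _ = (x ^ n * x ^ (n * (mx-1))) g := by rw [mul_one]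
  -- the submonoid of eventually-supported elements is a subgroup containing H
  have hM : ∀ h, h ∈ H → ∃ k, 0 < (z ^ k) h := by
    let M : Submonoid G :=
      { carrier := {g | ∃ k, 0 < (z ^ k) g}
        mul_mem' := by
          rintro a b ⟨j, hj⟩ ⟨k, hk⟩
          exact ⟨j + k, lt_of_lt_of_le (mul_pos hj hk)
            ((pow_add z j k) ▸ mul_apply_ge (hzpow0 j) (hzpow0 k) a b)⟩
        one_mem' := ⟨0, by simp [one_apply']⟩ }
    have hinv : ∀ g ∈ M, g⁻¹ ∈ M := by
      intro g hg
      obtain ⟨o, ho⟩ : ∃ o, orderOf g = o + 1 := ⟨orderOf g - 1, by have := orderOf_pos g; omega⟩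
      have h1 : g ^ o * g = 1 := by rw [← pow_succ, ← ho, pow_orderOf_eq_one]
      have h2 : g⁻¹ = g ^ o := inv_eq_of_mul_eq_one_left h1
      rw [h2]
      exact Submonoid.pow_mem M hg o
    let Mg : Subgroup G := { toSubmonoid := M, inv_mem' := fun {g} hg => hinv g hg }
    intro h hh
    have hle : H ≤ Mg := by
      rw [hH]
      refine (Subgroup.closure_le Mg).mpr ?_
      intro g hgs
      exact ⟨1, by rw [pow_one]; exact hxnz g (Finsupp.mem_support_iff.mp hgs)⟩
    exact hle hh
  -- choose a uniform power K
  obtain ⟨f, hf⟩ : ∃ f : G → ℕ, ∀ h : G, h ∈ H → 0 < (z ^ (f h)) h := by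
    have : ∀ h : G, ∃ k : ℕ, h ∈ H → 0 < (z ^ k) h := by
      intro h
      by_cases hh : h ∈ H
      · obtain ⟨k, hk⟩ := hM h hh; exact ⟨k, fun _ => hk⟩
      · exact ⟨0, fun h' => absurd h' hh⟩
    exact ⟨fun h => (this h).choose, fun h => (this h).choose_spec⟩
  set K : ℕ := 1 + Finset.univ.sup f with hK
  refine ⟨n * mx * K, by positivity, ⟨n * K, by ring⟩, ?_, ?_⟩
  · intro g hg
    have : mx ∣ n * mx * K := ⟨n * K, by ring⟩
    exact suppIn_pow_dvd hsuppmx this g hg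
  · intro h hh
    have : 0 < (z ^ K) h := hmono (f h) K (by
      have := Finset.le_sup (Finset.mem_univ h) (f := f); omega) h (hf h hh)
    rwa [hz, ← pow_mul] at this


theorem contract (H : Subgroup G) (w : MonoidAlgebra ℝ G)
    (hw0 : ∀ g, 0 ≤ w g) (hw1 : ∑ g : G, w g = 1) (hwsupp : ∀ g ∉ H, w g = 0)
    (hwpos : ∀ h, h ∈ H → 0 < w h) :
    ∃ δ : ℝ, 0 < δ ∧ δ ≤ 1 ∧ ∀ (q : ℕ) (u : MonoidAlgebra ℝ G),
      (∀ g, 0 ≤ u g) → (∑ g : G, u g) = 1 → (∀ g ∉ H, u g = 0) →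
      ∀ g, |(u * w ^ q) g - cH H g| ≤ (1 - δ) ^ q := by
  classical
  set F : Finset G := Finset.univ.filter (· ∈ H) with hF
  have hne : F.Nonempty := ⟨1, by simp [hF, H.one_mem]⟩
  set ε : ℝ := F.inf' hne w with hεdef
  have hε : 0 < ε := by
    rw [hεdef, Finset.lt_inf'_iff]
    intro h hh
    exact hwpos h (by simpa [hF] using hh)
  have hεle : ∀ h, h ∈ H → ε ≤ w h := fun h hh =>
    Finset.inf'_le _ (by simp [hF, hh])
  set δ : ℝ := (Nat.card H : ℝ) * ε with hδdef
  have hδ0 : 0 < δ := mul_pos (card_pos H) hε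
  have hδ1 : δ ≤ 1 := by
    have hsplit := Finset.sum_filter_add_sum_filter_not Finset.univ (· ∈ H) w
    have hzero : ∑ g ∈ Finset.univ.filter (fun g => ¬ g ∈ H), w g = 0 :=
      Finset.sum_eq_zero fun g hg => hwsupp g (by simpa using (Finset.mem_filter.mp hg).2)
    have hsum : ∑ g ∈ F, w g = 1 := by
      rw [hF]; rw [hw1] at hsplit; rw [hzero, add_zero] at hsplit; exact hsplit
    have hcard : (F.card : ℝ) * ε ≤ ∑ g ∈ F, w g := by
      have := Finset.card_nsmul_le_sum F w ε (fun h hh => hεle h (by simpa [hF] using hh))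
      simpa [nsmul_eq_mul] using this
    rw [hδdef, ← card_filter H]
    rw [hsum] at hcard
    exact hcard
  set c : MonoidAlgebra ℝ G := cH H with hcdef
  have hcsupp : ∀ g ∉ H, c g = 0 := fun g hg => by rw [hcdef, cH_apply, if_neg hg]
  have hcsum : ∑ g : G, c g = 1 := cH_sum H
  set v : MonoidAlgebra ℝ G := w - δ • c with hvdef
  have hv0 : ∀ g, 0 ≤ v g := by
    intro g
    rw [hvdef, MonoidAlgebra.coeff_sub, Finsupp.sub_apply, MonoidAlgebra.coeff_smul_apply, smul_eq_mul, hcdef, cH_apply]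
    by_cases hg : g ∈ H
    · rw [if_pos hg, hδdef]
      have : (Nat.card H : ℝ) * ε * (Nat.card H : ℝ)⁻¹ = ε := by
        field_simp
      rw [this]
      linarith [hεle g hg]
    · rw [if_neg hg, mul_zero, hwsupp g hg]; norm_num
  have hvsupp : ∀ g ∉ H, v g = 0 := by
    intro g hg
    rw [hvdef, MonoidAlgebra.coeff_sub, Finsupp.sub_apply, MonoidAlgebra.coeff_smul_apply, hwsupp g hg, hcsupp g hg]
    simp
  have hvsum : ∑ g : G, v g = 1 - δ := by
    have hpt : ∀ a : G, v a = w a - δ * c a := fun a => by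
      rw [hvdef, MonoidAlgebra.coeff_sub, Finsupp.sub_apply, MonoidAlgebra.coeff_smul_apply, smul_eq_mul]
    rw [Finset.sum_congr rfl (fun a _ => hpt a), Finset.sum_sub_distrib, hw1,
      ← Finset.mul_sum, hcsum, mul_one]
  have hcc : c * c = c := by
    rw [hcdef, mul_cH (fun g hg => by rw [cH_apply, if_neg hg]), cH_sum, one_smul]
  have hcw : c * w = c := by
    rw [hcdef, cH_mul hwsupp, hw1, one_smul]
  have key : ∀ u : MonoidAlgebra ℝ G, (∑ g : G, u g) = 1 → (∀ g ∉ H, u g = 0) →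
      u * w - c = (u - c) * v := by
    intro u hu1 husupp
    have huc : u * c = c := by rw [hcdef, mul_cH husupp, hu1, one_smul]
    have hcv : c * v = c - δ • c := by
      have : c * v = c * w - δ • (c * c) := by
        rw [hvdef]; rw [mul_sub, mul_smul_comm]
      rw [this, hcw, hcc]
    have huv : u * v = u * w - δ • c := by
      have : u * v = u * w - δ • (u * c) := by
        rw [hvdef]; rw [mul_sub, mul_smul_comm]
      rw [this, huc]
    rw [sub_mul, huv, hcv]
    abel
  refine ⟨δ, hδ0, hδ1, ?_⟩
  intro q
  induction q with
  | zero =>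
    intro u hu0 hu1 husupp g
    rw [pow_zero, mul_one, pow_zero]
    have hug : u g ≤ 1 := by
      rw [← hu1]
      exact Finset.single_le_sum (fun i _ => hu0 i) (Finset.mem_univ g)
    have hcg0 : 0 ≤ c g := cH_nonneg H g
    have hcg1 : c g ≤ 1 := cH_le_one H g
    rw [abs_sub_le_iff]
    constructor <;> linarith [hu0 g]
  | succ q ih =>
    intro u hu0 hu1 husupp g
    have hwq0 : ∀ g, 0 ≤ (w ^ q) g := pow_nonneg_apply hw0 q
    have hu'0 : ∀ g, 0 ≤ (u * w ^ q) g := mul_nonneg_apply hu0 hwq0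
    have hu'1 : ∑ g : G, (u * w ^ q) g = 1 := by
      rw [tot_mul, hu1, pow_sum_apply hw1, mul_one]
    have hu'supp : ∀ g ∉ H, (u * w ^ q) g = 0 :=
      suppIn_mul husupp (suppIn_pow_dvd (by simpa using hwsupp) (one_dvd q))
    have hM : ∀ a, |(u * w ^ q - c) a| ≤ (1 - δ) ^ q := by
      intro a
      rw [MonoidAlgebra.coeff_sub, Finsupp.sub_apply]
      exact ih u hu0 hu1 husupp a
    have heq : u * w ^ (q + 1) - c = (u * w ^ q - c) * v := by
      have := key (u * w ^ q) hu'1 hu'supp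
      rw [← this, pow_succ, mul_assoc]
    have : |(u * w ^ (q+1)) g - c g| = |((u * w ^ q - c) * v) g| := by
      rw [← Finsupp.sub_apply, ← MonoidAlgebra.coeff_sub, heq]
    rw [this]
    calc |((u * w ^ q - c) * v) g| ≤ (1 - δ) ^ q * ∑ a : G, v a :=
          conv_bound_right (pow_nonneg (by linarith) q) hM hv0 g
      _ = (1 - δ) ^ (q + 1) := by rw [hvsum, pow_succ]


theorem main_bound (x : MonoidAlgebra ℝ G) (hx1 : ∑ g : G, x g = 1) (hx0 : ∀ g, 0 ≤ x g)
    (n : ℕ) (hn : IsLeast {k : ℕ | 0 < k ∧ (x ^ k) (1 : G) ≠ 0} n)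
    (H : Subgroup G) (hH : H = Subgroup.closure ((x ^ n).coeff.support : Set G))
    (mx : ℕ) (hmx : IsLeast {k : ℕ | 0 < k ∧ ((x ^ k).coeff.support : Set G) ⊆ (H : Set G)} mx) :
    ∃ δ : ℝ, 0 < δ ∧ δ ≤ 1 ∧ ∃ P : ℕ, 0 < P ∧
      ∀ (mm t : ℕ) (g : G),
        |(x ^ (mm + t * mx)) g - (x ^ mm * cH H) g| ≤ (1 - δ) ^ (t * mx / P) := by
  obtain ⟨P, hP0, hPdvd, hPsupp, hPpos⟩ := doeblin x hx1 hx0 n hn H hH mx hmx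
  obtain ⟨δ, hδ0, hδ1, hcontr⟩ := contract H (x ^ P) (pow_nonneg_apply hx0 P)
    (pow_sum_apply hx1 P) hPsupp hPpos
  have hsuppmx : ∀ g ∉ H, (x ^ mx) g = 0 := by
    intro g hg
    by_contra hne
    exact hg (hmx.1.2 (Finsupp.mem_support_iff.mpr hne))
  refine ⟨δ, hδ0, hδ1, P, hP0, ?_⟩
  intro mm t g
  set q : ℕ := t * mx / P with hq
  set s : ℕ := t * mx % P with hs
  have hsq : s + P * q = t * mx := Nat.mod_add_div _ _
  have hdvds : mx ∣ s := by
    have h1 : mx ∣ t * mx := Dvd.intro_left t rfl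
    have h2 : mx ∣ P * q := Dvd.dvd.mul_right hPdvd q
    have : s = t * mx - P * q := by omega
    rw [this]
    exact Nat.dvd_sub h1 h2
  have hdecomp : x ^ (t * mx) = x ^ s * (x ^ P) ^ q := by
    rw [← pow_mul, ← pow_add, hsq]
  have hbound : ∀ a : G, |(x ^ (t * mx)) a - cH H a| ≤ (1 - δ) ^ q := by
    intro a
    rw [hdecomp]
    exact hcontr q (x ^ s) (pow_nonneg_apply hx0 s) (pow_sum_apply hx1 s)
      (suppIn_pow_dvd hsuppmx hdvds) a
  have hsplit : x ^ (mm + t * mx) = x ^ mm * x ^ (t * mx) := pow_add x mm (t * mx)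
  have heq : (x ^ (mm + t * mx)) g - (x ^ mm * cH H) g
      = (x ^ mm * (x ^ (t * mx) - cH H)) g := by
    rw [hsplit, mul_sub, MonoidAlgebra.coeff_sub, Finsupp.sub_apply]
  rw [heq]
  exact conv_bound_left (pow_nonneg_apply hx0 mm) (pow_sum_apply hx1 mm)
    (fun a => by rw [MonoidAlgebra.coeff_sub, Finsupp.sub_apply]; exact hbound a) g


theorem periodic_block_sum (d : ℕ) (hd : 0 < d) (L : ℕ → ℝ) :
    ∀ a : ℕ, ∑ j ∈ Finset.range (a * d), L (j % d)
      = a * ∑ i ∈ Finset.range d, L i := by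
  intro a
  induction a with
  | zero => simp
  | succ a ih =>
    have : (a + 1) * d = a * d + d := by ring
    rw [this, Finset.sum_range_add, ih]
    have : ∑ j ∈ Finset.range d, L ((a * d + j) % d) = ∑ i ∈ Finset.range d, L i := by
      refine Finset.sum_congr rfl fun j hj => ?_
      rw [Nat.add_comm, Nat.add_mul_mod_self_right, Nat.mod_eq_of_lt (Finset.mem_range.mp hj)]
    rw [this]
    push_cast
    ring

theorem cesaro_aux (d : ℕ) (hd : 0 < d) (L : ℕ → ℝ) (hL : ∀ i, |L i| ≤ 1) :
    Tendsto (fun N : ℕ => (N:ℝ)⁻¹ * ∑ j ∈ Finset.range N, L (j % d)) atTop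
      (𝓝 ((d:ℝ)⁻¹ * ∑ i ∈ Finset.range d, L i)) := by
  set T : ℝ := ∑ i ∈ Finset.range d, L i with hT
  have hTabs : |T| ≤ d := by
    calc |T| ≤ ∑ i ∈ Finset.range d, |L i| := Finset.abs_sum_le_sum_abs _ _
      _ ≤ ∑ i ∈ Finset.range d, 1 := Finset.sum_le_sum fun i _ => hL i
      _ = d := by simp
  have hstep : ∀ N : ℕ, |(∑ j ∈ Finset.range N, L (j % d)) - N * (T / d)| ≤ 2 * d := by
    intro N
    have hdecomp : N = (N / d) * d + N % d := (Nat.div_add_mod' N d).symm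
    have h1 : ∑ j ∈ Finset.range N, L (j % d)
        = (N / d : ℕ) * T + ∑ j ∈ Finset.range (N % d), L j := by
      conv_lhs => rw [hdecomp]
      rw [Finset.sum_range_add, periodic_block_sum d hd L]
      congr 1
      refine Finset.sum_congr rfl fun j hj => ?_
      have hj' : j < d := lt_of_lt_of_le (Finset.mem_range.mp hj) (Nat.mod_lt N hd).le
      rw [Nat.add_comm, Nat.add_mul_mod_self_right, Nat.mod_eq_of_lt hj']
    have h2 : |∑ j ∈ Finset.range (N % d), L j| ≤ d := by
      calc |∑ j ∈ Finset.range (N % d), L j| ≤ ∑ j ∈ Finset.range (N % d), |L j| :=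
            Finset.abs_sum_le_sum_abs _ _
        _ ≤ ∑ j ∈ Finset.range (N % d), 1 := Finset.sum_le_sum fun j _ => hL j
        _ = (N % d : ℕ) := by simp
        _ ≤ d := by exact_mod_cast (Nat.mod_lt N hd).le
    have h3 : |((N / d : ℕ) : ℝ) * T - N * (T / d)| ≤ d := by
      have hNd : (N:ℝ) = ((N / d : ℕ) : ℝ) * d + ((N % d : ℕ) : ℝ) := by
        exact_mod_cast congrArg (Nat.cast (R := ℝ)) hdecomp
      have hd0 : (d:ℝ) ≠ 0 := by positivity
      have : ((N / d : ℕ) : ℝ) * T - N * (T / d) = -(((N % d : ℕ) : ℝ) * T / d) := by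
        rw [hNd]; field_simp; try ring
      rw [this, abs_neg, abs_div, abs_mul, Nat.abs_cast, Nat.abs_cast]
      have hmodle : ((N % d : ℕ) : ℝ) ≤ d := by exact_mod_cast (Nat.mod_lt N hd).le
      calc ((N % d : ℕ):ℝ) * |T| / d ≤ (d:ℝ) * d / d := by
            apply div_le_div_of_nonneg_right ?_ (by positivity)
            · exact mul_le_mul hmodle hTabs (abs_nonneg T) (by positivity)
        _ = d := by field_simp
    calc |(∑ j ∈ Finset.range N, L (j % d)) - N * (T / d)|
        = |(((N / d : ℕ) : ℝ) * T - N * (T / d)) + ∑ j ∈ Finset.range (N % d), L j| := by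
          rw [h1]; congr 1; ring
      _ ≤ |((N / d : ℕ) : ℝ) * T - N * (T / d)| + |∑ j ∈ Finset.range (N % d), L j| :=
          abs_add_le _ _
      _ ≤ d + d := add_le_add h3 h2
      _ = 2 * d := by ring
  rw [show (d:ℝ)⁻¹ * T = T / d by ring]
  rw [tendsto_iff_dist_tendsto_zero]
  apply squeeze_zero' (g := fun N : ℕ => 2 * d / N)
  · exact Eventually.of_forall fun N => dist_nonneg
  · filter_upwards [Ici_mem_atTop 1] with N hN
    have hN0 : (0:ℝ) < N := by exact_mod_cast hN
    rw [Real.dist_eq]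
    have : (N:ℝ)⁻¹ * (∑ j ∈ Finset.range N, L (j % d)) - T / d
        = (N:ℝ)⁻¹ * ((∑ j ∈ Finset.range N, L (j % d)) - N * (T / d)) := by
      field_simp
    rw [this, abs_mul, abs_of_nonneg (inv_nonneg.mpr (Nat.cast_nonneg N))]
    rw [show 2*(d:ℝ)/N = (N:ℝ)⁻¹ * (2*d) by ring]
    exact mul_le_mul_of_nonneg_left (hstep N) (inv_nonneg.mpr (Nat.cast_nonneg N))
  · exact tendsto_const_div_atTop_nhds_zero_nat _

theorem cesaro_of_shifted (d : ℕ) (hd : 0 < d) (L : ℕ → ℝ) (hL : ∀ i, |L i| ≤ 1)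
    (b : ℕ → ℝ) (hb : Tendsto (fun j => b j - L (j % d)) atTop (𝓝 0)) :
    Tendsto (fun N : ℕ => (N:ℝ)⁻¹ * ∑ j ∈ Finset.range N, b j) atTop
      (𝓝 ((d:ℝ)⁻¹ * ∑ i ∈ Finset.range d, L i)) := by
  have h1 := hb.cesaro
  have h2 := cesaro_aux d hd L hL
  have h3 := h1.add h2
  rw [zero_add] at h3
  refine h3.congr fun N => ?_
  rw [Finset.sum_sub_distrib]
  ring

end Stmt19Aux

open Fin.NatCast

open scoped Classical in
/-- For the map `x ↦ x^r` (`r > 1`) on the simplex of `R[G]`, the Cesàro averages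
`q^(n)(x) = (1/n) Σ_{i=1}^n x^{r^i}` converge (coordinatewise) to
`(1/d) Σ_{i=0}^{d-1} x^{m_i} c_x`, where `(m₀, …, m_{d-1})` is the eventually repeating
part of the sequence `(r^n mod m_x)`:  `r^{kd+i} ≡ m_i (mod m_x)` for all large `k`. -/
theorem stmt19 {G : Type*} [Group G] [Fintype G]
    (r : ℕ) (hr : 1 < r)
    (x : MonoidAlgebra ℝ G) (hx1 : ∑ g : G, x.coeff g = 1) (hx0 : ∀ g, 0 ≤ x.coeff g)
    (n : ℕ) (hn : IsLeast {k : ℕ | 0 < k ∧ (x ^ k).coeff (1 : G) ≠ 0} n)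
    (H : Subgroup G) (hH : H = Subgroup.closure ((x ^ n).coeff.support : Set G))
    (c : MonoidAlgebra ℝ G)
    (hc : c = (Nat.card H : ℝ)⁻¹ •
      ∑ g ∈ Finset.univ.filter (· ∈ H), MonoidAlgebra.single g (1 : ℝ))
    (mx : ℕ) (hmx : IsLeast {k : ℕ | 0 < k ∧ ((x ^ k).coeff.support : Set G) ⊆ (H : Set G)} mx)
    (d : ℕ) (hd : 0 < d) (m : Fin d → ℕ)
    (hmlt : ∀ i, m i < mx) (hminj : Function.Injective m)
    (hper : ∃ N : ℕ, ∀ k ≥ N, ∀ i : Fin d, r ^ (k * d + (i : ℕ)) ≡ m i [MOD mx]) :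
    ∀ g : G,
      Tendsto (fun N : ℕ => ((N : ℝ)⁻¹ • ∑ i ∈ Finset.range N, x ^ r ^ (i + 1)).coeff g)
        atTop (nhds ((((d : ℝ)⁻¹ • ∑ i : Fin d, x ^ m i * c) : MonoidAlgebra ℝ G).coeff g)) := by
  intro g
  obtain ⟨δ, hδ0, hδ1, P, hP0, hbound⟩ := Stmt19Aux.main_bound x hx1 hx0 n hn H hH mx hmx
  haveI : NeZero d := ⟨hd.ne'⟩
  have hmx0 : 0 < mx := hmx.1.1
  obtain ⟨N₀, hN₀⟩ := hper
  have hcH : c = Stmt19Aux.cH H := by rw [hc]; rfl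
  have hc0 : ∀ a, 0 ≤ c a := by rw [hcH]; exact Stmt19Aux.cH_nonneg H
  have hc1 : ∑ a : G, c a = 1 := by rw [hcH]; exact Stmt19Aux.cH_sum H
  have hentry : ∀ (kk : ℕ) (a : G), 0 ≤ (x ^ kk * c) a ∧ (x ^ kk * c) a ≤ 1 := by
    intro kk a
    have h0 := Stmt19Aux.mul_nonneg_apply (Stmt19Aux.pow_nonneg_apply hx0 kk) hc0
    have h1 : ∑ b : G, (x ^ kk * c) b = 1 := by
      rw [Stmt19Aux.tot_mul, Stmt19Aux.pow_sum_apply hx1, hc1, one_mul]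
    exact ⟨h0 a, by rw [← h1]; exact Finset.single_le_sum (fun b _ => h0 b) (Finset.mem_univ a)⟩
  -- the basic growth fact
  have hEk : ∀ (i : Fin d) (k : ℕ), k + 1 ≤ r ^ (k * d + (i : ℕ) + 1) := by
    intro i k
    have h1 : k ≤ k * d := Nat.le_mul_of_pos_right k hd
    have h2 : k * d + (i : ℕ) + 1 < 2 ^ (k * d + (i : ℕ) + 1) := Nat.lt_two_pow_self
    have h3 : 2 ^ (k * d + (i : ℕ) + 1) ≤ r ^ (k * d + (i : ℕ) + 1) :=
      Nat.pow_le_pow_left hr _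
    omega
  -- the exponent tends to infinity
  have hq : ∀ i : Fin d,
      Tendsto (fun k => (r ^ (k * d + (i : ℕ) + 1) / mx * mx) / P) atTop atTop := by
    intro i
    rw [tendsto_atTop_atTop]
    intro b
    refine ⟨b * P + mx, fun k hk => ?_⟩
    have hE := hEk i k
    rw [Nat.le_div_iff_mul_le hP0]
    have hdm : r ^ (k * d + (i : ℕ) + 1) / mx * mx + r ^ (k * d + (i : ℕ) + 1) % mx
        = r ^ (k * d + (i : ℕ) + 1) := Nat.div_add_mod' _ _
    have hlt : r ^ (k * d + (i : ℕ) + 1) % mx < mx := Nat.mod_lt _ hmx0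
    have hkX : b * P + mx ≤ r ^ (k * d + (i : ℕ) + 1) :=
      le_trans hk (le_trans (Nat.le_succ k) hE)
    have hYeq : r ^ (k * d + (i : ℕ) + 1) / mx * mx
        = r ^ (k * d + (i : ℕ) + 1) - r ^ (k * d + (i : ℕ) + 1) % mx :=
      Nat.eq_sub_of_add_eq hdm
    calc b * P ≤ r ^ (k * d + (i : ℕ) + 1) - mx := Nat.le_sub_of_add_le hkX
      _ ≤ r ^ (k * d + (i : ℕ) + 1) - r ^ (k * d + (i : ℕ) + 1) % mx :=
          Nat.sub_le_sub_left (le_of_lt hlt) _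
      _ = r ^ (k * d + (i : ℕ) + 1) / mx * mx := hYeq.symm
  -- subsequence convergence
  have hsub : ∀ i : Fin d, Tendsto (fun k => (x ^ (r ^ (k * d + (i : ℕ) + 1))) g) atTop
      (𝓝 ((x ^ m (i + 1) * c) g)) := by
    intro i
    rw [tendsto_iff_dist_tendsto_zero]
    apply squeeze_zero' (g := fun k => (1 - δ) ^ ((r ^ (k * d + (i : ℕ) + 1) / mx * mx) / P))
    · exact Eventually.of_forall fun k => dist_nonneg
    · filter_upwards [Ici_mem_atTop N₀] with k hk
      have hval : ((i + 1 : Fin d) : ℕ) = ((i : ℕ) + 1) % d := by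
        rw [Fin.val_add, Fin.val_one']
        conv_rhs => rw [Nat.add_mod, Nat.mod_eq_of_lt i.isLt]
      obtain ⟨k', hk'ge, hk'eq⟩ : ∃ k', k ≤ k' ∧
          k' * d + ((i + 1 : Fin d) : ℕ) = k * d + (i : ℕ) + 1 := by
        by_cases hie : (i : ℕ) + 1 = d
        · refine ⟨k + 1, Nat.le_succ k, ?_⟩
          rw [hval, hie, Nat.mod_self, Nat.succ_mul]
          omega
        · refine ⟨k, le_refl k, ?_⟩
          rw [hval, Nat.mod_eq_of_lt (by have := i.isLt; omega)]
          omega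
      have hmodeq := hN₀ k' (le_trans hk hk'ge) (i + 1)
      rw [hk'eq] at hmodeq
      have hmod : r ^ (k * d + (i : ℕ) + 1) % mx = m (i + 1) := by
        rw [Nat.ModEq] at hmodeq
        rwa [Nat.mod_eq_of_lt (hmlt (i + 1))] at hmodeq
      have hEdecomp : r ^ (k * d + (i : ℕ) + 1)
          = m (i + 1) + (r ^ (k * d + (i : ℕ) + 1) / mx) * mx := by
        have h := Nat.mod_add_div' (r ^ (k * d + (i : ℕ) + 1)) mx
        rw [hmod] at h
        exact h.symm
      have hb := hbound (m (i + 1)) (r ^ (k * d + (i : ℕ) + 1) / mx) g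
      rw [← hEdecomp] at hb
      rw [Real.dist_eq, hcH]
      exact hb
    · exact (tendsto_pow_atTop_nhds_zero_of_lt_one (by linarith) (by linarith)).comp (hq i)
  -- the shifted limit values
  set L : ℕ → ℝ := fun j => (x ^ m ((j : Fin d) + 1) * c) g with hLdef
  have hL1 : ∀ j, |L j| ≤ 1 := by
    intro j
    rw [hLdef, abs_le]
    exact ⟨by linarith [(hentry (m ((j : Fin d) + 1)) g).1], (hentry _ g).2⟩
  -- combined convergence
  have hcomb : Tendsto (fun j : ℕ => (x ^ (r ^ (j + 1))) g - L (j % d)) atTop (𝓝 0) := by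
    rw [Metric.tendsto_atTop]
    intro ε hε
    have hNi : ∀ i : Fin d, ∃ Ni : ℕ, ∀ k ≥ Ni,
        dist ((x ^ (r ^ (k * d + (i : ℕ) + 1))) g) ((x ^ m (i + 1) * c) g) < ε :=
      fun i => Metric.tendsto_atTop.mp (hsub i) ε hε
    choose Nf hNf using hNi
    refine ⟨d * (Finset.univ.sup Nf + 1), fun j hj => ?_⟩
    have hilt : j % d < d := Nat.mod_lt j hd
    set i : Fin d := ⟨j % d, hilt⟩ with hi
    set k : ℕ := j / d with hkdef
    have hjeq : k * d + (i : ℕ) = j := by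
      rw [hkdef, Nat.mul_comm]
      exact Nat.div_add_mod j d
    have hk : Nf i ≤ k := by
      have h1 : Finset.univ.sup Nf + 1 ≤ k := by
        rw [hkdef, Nat.le_div_iff_mul_le hd]
        calc (Finset.univ.sup Nf + 1) * d = d * (Finset.univ.sup Nf + 1) := Nat.mul_comm _ _
          _ ≤ j := hj
      have h2 : Nf i ≤ Finset.univ.sup Nf := Finset.le_sup (Finset.mem_univ i)
      omega
    have hd1 := hNf i k hk
    have hcast : ((j % d : ℕ) : Fin d) = i := by
      apply Fin.ext
      rw [Fin.val_natCast]
      exact Nat.mod_eq_of_lt hilt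
    have hLj : L (j % d) = (x ^ m (i + 1) * c) g := by
      simp only [hLdef]
      rw [hcast]
    rw [Real.dist_eq, sub_zero, hLj, ← Real.dist_eq]
    rw [← hjeq] at *
    exact hd1
  -- conclude
  have hfinal := Stmt19Aux.cesaro_of_shifted d hd L hL1
      (fun j => (x ^ (r ^ (j + 1))) g) hcomb
  have hsumL : ∑ i ∈ Finset.range d, L i = ∑ i : Fin d, (x ^ m i * c) g := by
    rw [Finset.sum_range fun i => L i]
    refine Fintype.sum_equiv (Equiv.addRight (1 : Fin d)) _ _ fun i0 => ?_
    have hcast : ((i0 : ℕ) : Fin d) = i0 := by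
      apply Fin.ext
      rw [Fin.val_natCast]
      exact Nat.mod_eq_of_lt i0.isLt
    simp only [hLdef]
    rw [hcast]
    rfl
  rw [hsumL] at hfinal
  rw [show (((d : ℝ)⁻¹ • ∑ i : Fin d, x ^ m i * c : MonoidAlgebra ℝ G)) g
      = (d : ℝ)⁻¹ * ∑ i : Fin d, (x ^ m i * c) g by
    rw [MonoidAlgebra.coeff_smul_apply, smul_eq_mul, MonoidAlgebra.coeff_sum, Finset.sum_apply']]
  refine hfinal.congr fun N => ?_
  rw [MonoidAlgebra.coeff_smul_apply, smul_eq_mul, MonoidAlgebra.coeff_sum, Finset.sum_apply']
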